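/- Tighter Core-set loss bound via average radial distances (Theorem 2). Let π : X → Fin b be a measurable nearest-point selector, i.e. dist(x, x̃(π x)) = min_{k∈Fin b} dist(x, x̃ k) for every x ∈ X, with coverage areas N(k) = π⁻¹{k}, and define the average radial distance δ_s(k) = (μ(N(k)))⁻¹ ∫_{N(k)} dist(x, x̃ k) dμ(x) if μ(N(k)) > 0 and δ_s(k) = 0 otherwise; assume each δ_s(k) is finite. Let (Ω, P) be a probability space, n ≥ 1, and W_1, …, W_n : Ω → X × Fin C i.i.d. random variables with law ν. Then for every γ ∈ (0,1), with probability at least 1 − γ, (1/n) ∑_{t=1}^n ℓ((W_t).1, (W_t).2) ≤ (max_{k∈Fin b} δ_s(k))·(λl + λη·L·C) + sqrt(L²·log(1/γ)/(2n)). -/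

import Mathlib

open MeasureTheory ProbabilityTheory ENNReal
open scoped NNReal

/-- Core real inequality for Hoeffding's lemma. -/
lemma coreset_aux_core {p : ℝ} (hp0 : 0 ≤ p) (hp1 : p ≤ 1) {u : ℝ} (hu : 0 ≤ u) :
    1 - p + p * Real.exp u ≤ Real.exp (p * u + u ^ 2 / 8) := by
  set U : ℝ → ℝ := fun s => 1 - p + p * Real.exp s with hUdef
  have hU1 : ∀ s, 0 ≤ s → 1 ≤ U s := by
    intro s hs
    have h1 : 1 ≤ Real.exp s := Real.one_le_exp hs
    simp only [hUdef]
    nlinarith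
  have hUpos : ∀ s, 0 ≤ s → 0 < U s := fun s hs => lt_of_lt_of_le one_pos (hU1 s hs)
  have hUder : ∀ s, HasDerivAt U (p * Real.exp s) s := by
    intro s
    exact ((Real.hasDerivAt_exp s).const_mul p).const_add (1 - p)
  set g1 : ℝ → ℝ := fun s => p * Real.exp s / U s - p - s / 4 with hg1def
  set g : ℝ → ℝ := fun s => Real.log (U s) - p * s - s ^ 2 / 8 with hgdef
  have hgder : ∀ s, 0 ≤ s → HasDerivAt g (g1 s) s := by
    intro s hs
    have hne : U s ≠ 0 := (hUpos s hs).ne'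
    have hlog : HasDerivAt (fun t => Real.log (U t)) (p * Real.exp s / U s) s :=
      (hUder s).log hne
    have hsq : HasDerivAt (fun t : ℝ => t ^ 2 / 8) (s / 4) s := by
      have := (hasDerivAt_pow 2 s).div_const 8
      exact this.congr_deriv (by ring)
    have := (hlog.sub ((hasDerivAt_id s).const_mul p)).sub hsq
    exact this.congr_deriv (by simp [hg1def])
  have hg1der : ∀ s, 0 ≤ s →
      HasDerivAt g1 ((p * Real.exp s * U s - p * Real.exp s * (p * Real.exp s)) / U s ^ 2 - 1 / 4) s := by
    intro s hs
    have hne : U s ≠ 0 := (hUpos s hs).ne'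
    have hdiv : HasDerivAt (fun t => p * Real.exp t / U t)
        ((p * Real.exp s * U s - p * Real.exp s * (p * Real.exp s)) / U s ^ 2) s :=
      ((Real.hasDerivAt_exp s).const_mul p).div (hUder s) hne
    have hlin : HasDerivAt (fun t : ℝ => t / 4) (1 / 4 : ℝ) s := by
      simpa using (hasDerivAt_id s).div_const 4
    exact (hdiv.sub_const p).sub hlin
  have hg1nonpos : ∀ s, 0 ≤ s →
      (p * Real.exp s * U s - p * Real.exp s * (p * Real.exp s)) / U s ^ 2 - 1 / 4 ≤ 0 := by
    intro s hs
    have hU0 : (0:ℝ) < U s := hUpos s hs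
    have key : ∀ Av Uv : ℝ, 0 < Uv → (Av * Uv - Av * Av) / Uv ^ 2 - 1 / 4 ≤ 0 := by
      intro Av Uv hUv
      rw [sub_nonpos, div_le_iff₀ (by positivity)]
      nlinarith [sq_nonneg (Uv - 2 * Av)]
    exact key _ _ hU0
  -- g1 is antitone on [0, ∞)
  have hg1anti : AntitoneOn g1 (Set.Ici (0:ℝ)) := by
    apply antitoneOn_of_deriv_nonpos (convex_Ici 0)
    · intro s hs
      exact (hg1der s hs).continuousAt.continuousWithinAt
    · intro s hs
      rw [interior_Ici] at hs
      exact (hg1der s (le_of_lt hs)).differentiableAt.differentiableWithinAt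
    · intro s hs
      rw [interior_Ici] at hs
      rw [(hg1der s hs.le).deriv]
      exact hg1nonpos s hs.le
  have hg10 : g1 0 = 0 := by
    simp [hg1def, hUdef]
  have hg1le : ∀ s, 0 ≤ s → g1 s ≤ 0 := by
    intro s hs
    have := hg1anti (Set.self_mem_Ici) hs hs
    rwa [hg10] at this
  have hganti : AntitoneOn g (Set.Ici (0:ℝ)) := by
    apply antitoneOn_of_deriv_nonpos (convex_Ici 0)
    · intro s hs
      exact (hgder s hs).continuousAt.continuousWithinAt
    · intro s hs
      rw [interior_Ici] at hs
      exact (hgder s (le_of_lt hs)).differentiableAt.differentiableWithinAt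
    · intro s hs
      rw [interior_Ici] at hs
      rw [(hgder s hs.le).deriv]
      exact hg1le s hs.le
  have hg0 : g 0 = 0 := by
    simp [hgdef, hUdef]
  have hgu : g u ≤ 0 := by
    have := hganti (Set.self_mem_Ici) hu hu
    rwa [hg0] at this
  have hlog : Real.log (U u) ≤ p * u + u ^ 2 / 8 := by
    simp only [hgdef] at hgu
    linarith
  have := (Real.log_le_iff_le_exp (hUpos u hu)).mp hlog
  simpa [hUdef] using this

/-- Hoeffding-type mgf bound for a `[0, L]`-valued random variable. -/
lemma coreset_aux_mgf {Ω : Type*} [MeasurableSpace Ω] (P : Measure Ω) [IsProbabilityMeasure P]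
    (Y : Ω → ℝ) (hY : Measurable Y) (L : ℝ) (hL : 0 < L)
    (h0 : ∀ ω, 0 ≤ Y ω) (h1 : ∀ ω, Y ω ≤ L) (s : ℝ) (hs : 0 ≤ s) :
    mgf Y P s ≤ Real.exp (s * (∫ ω, Y ω ∂P) + s ^ 2 * L ^ 2 / 8) := by
  have hYint : Integrable Y P := by
    refine (integrable_const L).mono' hY.aestronglyMeasurable (ae_of_all _ fun ω => ?_)
    rw [Real.norm_eq_abs, abs_of_nonneg (h0 ω)]
    exact h1 ω
  set m := ∫ ω, Y ω ∂P with hm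
  have hm0 : 0 ≤ m := integral_nonneg fun ω => h0 ω
  have hmL : m ≤ L := by
    have := integral_mono hYint (integrable_const L) fun ω => h1 ω
    simpa using this
  have hpw : ∀ ω, Real.exp (s * Y ω) ≤ (1 - Y ω / L) + Y ω / L * Real.exp (s * L) := by
    intro ω
    set θ := Y ω / L with hθ
    have hθ0 : 0 ≤ θ := div_nonneg (h0 ω) hL.le
    have hθ1 : θ ≤ 1 := (div_le_one hL).mpr (h1 ω)
    have := convexOn_exp.2 (Set.mem_univ (0:ℝ)) (Set.mem_univ (s * L))
      (by linarith : (0:ℝ) ≤ 1 - θ) hθ0 (by ring)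
    simp only [smul_eq_mul, mul_zero, Real.exp_zero, mul_one, zero_add] at this
    have harg : θ * (s * L) = s * Y ω := by
      rw [hθ, div_mul_eq_mul_div, div_eq_iff hL.ne']
      ring
    rw [harg] at this
    linarith
  have hexp_int : Integrable (fun ω => Real.exp (s * Y ω)) P := by
    refine (integrable_const (Real.exp (s * L))).mono'
      ((hY.const_mul s).exp.aestronglyMeasurable) (ae_of_all _ fun ω => ?_)
    rw [Real.norm_eq_abs, abs_of_pos (Real.exp_pos _)]
    exact Real.exp_le_exp.mpr (mul_le_mul_of_nonneg_left (h1 ω) hs)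
  have hrhs_int : Integrable (fun ω => (1 - Y ω / L) + Y ω / L * Real.exp (s * L)) P :=
    ((integrable_const (1:ℝ)).sub (hYint.div_const L)).add ((hYint.div_const L).mul_const _)
  have hint_le : mgf Y P s ≤ (1 - m / L) + m / L * Real.exp (s * L) := by
    have h := integral_mono hexp_int hrhs_int hpw
    have heq : ∫ ω, ((1 - Y ω / L) + Y ω / L * Real.exp (s * L)) ∂P
        = (1 - m / L) + m / L * Real.exp (s * L) := by
      have hfun : (fun ω => (1 - Y ω / L) + Y ω / L * Real.exp (s * L))
          = fun ω => 1 + (Real.exp (s * L) - 1) / L * Y ω := by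
        funext ω
        field_simp
        ring
      rw [hfun, integral_add (integrable_const (1:ℝ)) (hYint.const_mul _),
        MeasureTheory.integral_const_mul, integral_const]
      simp only [measure_univ, probReal_univ, ENNReal.toReal_one, smul_eq_mul, one_mul, ← hm]
      field_simp
      ring
    rw [heq] at h
    exact h
  refine hint_le.trans ?_
  have := coreset_aux_core (p := m / L) (div_nonneg hm0 hL.le) ((div_le_one hL).mpr hmL)
    (u := s * L) (mul_nonneg hs hL.le)
  calc 1 - m / L + m / L * Real.exp (s * L)
      ≤ Real.exp (m / L * (s * L) + (s * L) ^ 2 / 8) := this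
    _ = Real.exp (s * m + s ^ 2 * L ^ 2 / 8) := by
        congr 1
        field_simp

theorem tighter_coreset_loss_bound
    {X : Type*} [MetricSpace X] [MeasurableSpace X] [BorelSpace X]
    (μ : Measure X) [IsProbabilityMeasure μ]
    (b : ℕ) (hb : 0 < b) (xsel : Fin b → X)
    (C : ℕ) (hC : 0 < C)
    (η : Fin C → X → ℝ) (lEta : ℝ≥0)
    (hη0 : ∀ c x, 0 ≤ η c x) (hη1 : ∀ x, ∑ c, η c x = 1)
    (hηLip : ∀ c, LipschitzWith lEta (η c))
    (ℓ : X → Fin C → ℝ) (L lLoss : ℝ≥0)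
    (hℓ0 : ∀ x c, 0 ≤ ℓ x c) (hℓL : ∀ x c, ℓ x c ≤ (L : ℝ))
    (hℓLip : ∀ c, LipschitzWith lLoss (fun x => ℓ x c))
    (hℓzero : ∀ k c, ℓ (xsel k) c = 0)
    (ν : Measure (X × Fin C)) [IsProbabilityMeasure ν]
    (hν : ∀ S : Set X, MeasurableSet S → ∀ c : Fin C,
      ν (S ×ˢ ({c} : Set (Fin C))) = ENNReal.ofReal (∫ x in S, η c x ∂μ))
    -- the measurable nearest-point selector and its coverage areas
    (π : X → Fin b) (hπmeas : Measurable π)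
    (hπ : ∀ x, dist x (xsel (π x)) = ⨅ k : Fin b, dist x (xsel k))
    -- the average radial distances (assumed finite, i.e. given by integrable functions)
    (δs : Fin b → ℝ)
    (hδs_int : ∀ k, IntegrableOn (fun x => dist x (xsel k)) (π ⁻¹' {k}) μ)
    (hδs_pos : ∀ k, 0 < μ (π ⁻¹' {k}) →
      δs k = (μ (π ⁻¹' {k})).toReal⁻¹ * ∫ x in π ⁻¹' {k}, dist x (xsel k) ∂μ)
    (hδs_zero : ∀ k, ¬ 0 < μ (π ⁻¹' {k}) → δs k = 0)
    {Ω : Type*} [MeasurableSpace Ω] (P : Measure Ω) [IsProbabilityMeasure P]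
    (n : ℕ) (hn : 0 < n)
    (W : Fin n → Ω → X × Fin C) (hWmeas : ∀ t, Measurable (W t))
    (hWindep : iIndepFun W P)
    (hWlaw : ∀ t, Measure.map (W t) P = ν)
    (γ : ℝ) (hγ0 : 0 < γ) (hγ1 : γ < 1) :
    ENNReal.ofReal (1 - γ) ≤
      P {ω | (1 / (n : ℝ)) * ∑ t, ℓ (W t ω).1 (W t ω).2 ≤
        (⨆ k : Fin b, δs k) * ((lLoss : ℝ) + (lEta : ℝ) * (L : ℝ) * (C : ℝ))
          + Real.sqrt ((L : ℝ) ^ 2 * Real.log (1 / γ) / (2 * n))} := by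
  classical
  have hbne : Nonempty (Fin b) := ⟨⟨0, hb⟩⟩
  have hδs0 : ∀ k, 0 ≤ δs k := by
    intro k
    by_cases hk : 0 < μ (π ⁻¹' {k})
    · rw [hδs_pos k hk]
      exact mul_nonneg (inv_nonneg.mpr ENNReal.toReal_nonneg)
        (integral_nonneg fun x => dist_nonneg)
    · rw [hδs_zero k hk]
  have hbdd : BddAbove (Set.range δs) := Set.Finite.bddAbove (Set.finite_range δs)
  have hsup_ge : ∀ k, δs k ≤ ⨆ k, δs k := fun k => le_ciSup hbdd k
  have hsup0 : 0 ≤ ⨆ k : Fin b, δs k :=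
    le_trans (hδs0 (Classical.arbitrary _)) (hsup_ge _)
  set K : ℝ := (lLoss : ℝ) + (lEta : ℝ) * (L : ℝ) * (C : ℝ) with hKdef
  have hK0 : 0 ≤ K := by positivity
  set B : ℝ := (⨆ k : Fin b, δs k) * K with hBdef
  have hB0 : 0 ≤ B := mul_nonneg hsup0 hK0
  set ε : ℝ := Real.sqrt ((L : ℝ) ^ 2 * Real.log (1 / γ) / (2 * n)) with hεdef
  have hε0 : 0 ≤ ε := Real.sqrt_nonneg _
  by_cases hL0 : (L : ℝ) = 0
  · -- degenerate case: the loss is identically zero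
    have hlz : ∀ x c, ℓ x c = 0 := fun x c =>
      le_antisymm (by rw [← hL0]; exact hℓL x c) (hℓ0 x c)
    have hset : {ω | (1 / (n : ℝ)) * ∑ t, ℓ (W t ω).1 (W t ω).2 ≤ B + ε} = Set.univ := by
      apply Set.eq_univ_of_forall
      intro ω
      simp only [Set.mem_setOf_eq, hlz, Finset.sum_const_zero, mul_zero]
      exact add_nonneg hB0 hε0
    rw [hset, measure_univ]
    exact ENNReal.ofReal_le_one.mpr (by linarith)
  have hLpos : (0:ℝ) < L := lt_of_le_of_ne L.coe_nonneg (Ne.symm hL0)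
  -- measurability and integrability basics
  have hℓc : ∀ c, Measurable fun x => ℓ x c := fun c => (hℓLip c).continuous.measurable
  set f : X × Fin C → ℝ := fun p => ℓ p.1 p.2 with hfdef
  have hfmeas : Measurable f := measurable_from_prod_countable_left fun c => hℓc c
  have hηm : ∀ c, Measurable (η c) := fun c => (hηLip c).continuous.measurable
  have hη_le1 : ∀ c x, η c x ≤ 1 := by
    intro c x
    calc η c x ≤ ∑ c', η c' x :=
          Finset.single_le_sum (fun c' _ => hη0 c' x) (Finset.mem_univ c)
      _ = 1 := hη1 x
  have hηint : ∀ c, Integrable (η c) μ := by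
    intro c
    refine (integrable_const (1:ℝ)).mono' (hηm c).aestronglyMeasurable (ae_of_all _ fun x => ?_)
    rw [Real.norm_eq_abs, abs_of_nonneg (hη0 c x)]
    exact hη_le1 c x
  -- Step A1: the pushforward identity for each class c
  have hmap : ∀ c : Fin C, (ν.restrict (Set.univ ×ˢ ({c} : Set (Fin C)))).map Prod.fst
      = μ.withDensity (fun x => ENNReal.ofReal (η c x)) := by
    intro c
    refine Measure.ext fun S hS => ?_
    rw [Measure.map_apply measurable_fst hS,
      Measure.restrict_apply (measurable_fst hS),
      withDensity_apply _ hS]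
    have hseteq : Prod.fst ⁻¹' S ∩ Set.univ ×ˢ ({c} : Set (Fin C))
        = S ×ˢ ({c} : Set (Fin C)) := by
      ext ⟨x', c'⟩
      simp only [Set.mem_inter_iff, Set.mem_preimage, Set.mem_prod, Set.mem_univ, true_and,
        Set.mem_singleton_iff]
    rw [hseteq, hν S hS c,
      ofReal_integral_eq_lintegral_ofReal ((hηint c).integrableOn)
        (ae_of_all _ fun x => hη0 c x)]
  -- Step A2: the ν-mean of f
  have hfint : Integrable f ν := by
    refine (integrable_const ((L:ℝ))).mono' hfmeas.aestronglyMeasurable (ae_of_all _ fun p => ?_)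
    rw [Real.norm_eq_abs, abs_of_nonneg (hℓ0 _ _)]
    exact hℓL _ _
  have hmeasAc : ∀ c : Fin C, MeasurableSet (Set.univ ×ˢ ({c} : Set (Fin C))) :=
    fun c => by exact (MeasurableSet.univ (α := X)).prod (measurableSet_singleton c)
  have hprodint : ∀ c : Fin C, Integrable (fun x => η c x * ℓ x c) μ := by
    intro c
    refine (integrable_const ((L:ℝ))).mono' ((hηm c).mul (hℓc c)).aestronglyMeasurable
      (ae_of_all _ fun x => ?_)
    rw [Real.norm_eq_abs, abs_of_nonneg (mul_nonneg (hη0 c x) (hℓ0 x c))]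
    calc η c x * ℓ x c ≤ 1 * (L:ℝ) := mul_le_mul (hη_le1 c x) (hℓL x c) (hℓ0 x c) one_pos.le
      _ = (L:ℝ) := one_mul _
  have hm_eq : ∫ p, f p ∂ν = ∫ x, (∑ c, η c x * ℓ x c) ∂μ := by
    have hpart : (⋃ c : Fin C, (Set.univ : Set X) ×ˢ ({c} : Set (Fin C))) = (Set.univ : Set (X × Fin C)) := by
      ext ⟨x', c'⟩
      simp
    have hdisj : Pairwise (Function.onFun Disjoint
        fun c : Fin C => (Set.univ : Set X) ×ˢ ({c} : Set (Fin C))) := by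
      intro c c' hcc
      simp only [Function.onFun, Set.disjoint_left]
      rintro ⟨x', c''⟩ h1 h2
      exact hcc ((h1.2 : c'' = c).symm.trans (h2.2 : c'' = c'))
    have hsplit : ∫ p, f p ∂ν = ∑ c : Fin C, ∫ p in Set.univ ×ˢ ({c} : Set (Fin C)), f p ∂ν := by
      rw [← setIntegral_univ (f := f), ← hpart,
        integral_iUnion hmeasAc hdisj (by rw [hpart]; exact hfint.integrableOn), tsum_fintype]
    have hcpiece : ∀ c : Fin C, ∫ p in Set.univ ×ˢ ({c} : Set (Fin C)), f p ∂ν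
        = ∫ x, η c x * ℓ x c ∂μ := by
      intro c
      have h1 : ∫ p in Set.univ ×ˢ ({c} : Set (Fin C)), f p ∂ν
          = ∫ p in Set.univ ×ˢ ({c} : Set (Fin C)), ℓ p.1 c ∂ν := by
        refine setIntegral_congr_fun (hmeasAc c) fun p hp => ?_
        have hp2 : p.2 = c := hp.2
        simp [hfdef, hp2]
      have h2 : ∫ p in Set.univ ×ˢ ({c} : Set (Fin C)), ℓ p.1 c ∂ν
          = ∫ x, ℓ x c ∂((ν.restrict (Set.univ ×ˢ ({c} : Set (Fin C)))).map Prod.fst) :=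
        (integral_map measurable_fst.aemeasurable (hℓc c).aestronglyMeasurable).symm
      rw [h1, h2, hmap c]
      have h3 : μ.withDensity (fun x => ENNReal.ofReal (η c x))
          = μ.withDensity (fun x => ((η c x).toNNReal : ℝ≥0∞)) := rfl
      rw [h3, integral_withDensity_eq_integral_smul (hηm c).real_toNNReal (fun x => ℓ x c)]
      congr 1
      funext x
      simp [NNReal.smul_def, Real.coe_toNNReal _ (hη0 c x)]
    rw [hsplit]
    simp_rw [hcpiece]
    rw [← integral_finset_sum _ (fun c _ => hprodint c)]
  -- Step A3: pointwise bound and mean bound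
  have hpt : ∀ x, (∑ c, η c x * ℓ x c) ≤ dist x (xsel (π x)) * K := by
    intro x
    set y := xsel (π x) with hy
    set d := dist x y with hd
    have hd0 : 0 ≤ d := dist_nonneg
    have hℓy : ∀ c, ℓ y c = 0 := fun c => hℓzero (π x) c
    have h1 : ∀ c, ℓ x c ≤ (lLoss : ℝ) * d := by
      intro c
      have hlip := (hℓLip c).dist_le_mul x y
      rw [Real.dist_eq] at hlip
      have habs := le_trans (le_abs_self _) hlip
      rw [hℓy c] at habs
      linarith
    have h2 : ∀ c, η c x - η c y ≤ (lEta : ℝ) * d := by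
      intro c
      have hlip := (hηLip c).dist_le_mul x y
      rw [Real.dist_eq] at hlip
      linarith [le_abs_self (η c x - η c y)]
    calc ∑ c, η c x * ℓ x c
        = ∑ c, ((η c x - η c y) * ℓ x c + η c y * ℓ x c) := by
          refine Finset.sum_congr rfl fun c _ => ?_
          ring
      _ ≤ ∑ c : Fin C, ((lEta : ℝ) * d * (L : ℝ) + η c y * ((lLoss : ℝ) * d)) := by
          refine Finset.sum_le_sum fun c _ => ?_
          have hb1 : (η c x - η c y) * ℓ x c ≤ (lEta : ℝ) * d * (L : ℝ) := by
            rcases le_or_gt (η c x - η c y) 0 with h | h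
            · exact le_trans (mul_nonpos_of_nonpos_of_nonneg h (hℓ0 x c)) (by positivity)
            · calc (η c x - η c y) * ℓ x c ≤ ((lEta : ℝ) * d) * (L : ℝ) :=
                  mul_le_mul (h2 c) (hℓL x c) (hℓ0 x c) (by positivity)
                _ = (lEta : ℝ) * d * (L : ℝ) := rfl
          have hb2 : η c y * ℓ x c ≤ η c y * ((lLoss : ℝ) * d) :=
            mul_le_mul_of_nonneg_left (h1 c) (hη0 c y)
          linarith
      _ = (C : ℝ) * ((lEta : ℝ) * d * (L : ℝ)) + (∑ c, η c y) * ((lLoss : ℝ) * d) := by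
          rw [Finset.sum_add_distrib, Finset.sum_const, ← Finset.sum_mul]
          simp [Finset.card_univ, nsmul_eq_mul]
      _ = d * K := by
          rw [hη1 y, hKdef]
          ring
  have hNmeas : ∀ k, MeasurableSet (π ⁻¹' {k}) := fun k => hπmeas (measurableSet_singleton k)
  have hdfun : (fun x => dist x (xsel (π x)))
      = fun x => ∑ k, (π ⁻¹' {k}).indicator (fun x' => dist x' (xsel k)) x := by
    funext x
    symm
    rw [Finset.sum_eq_single (π x)]
    · exact Set.indicator_of_mem (by exact rfl) _
    · intro k _ hk
      apply Set.indicator_of_notMem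
      intro hx
      exact hk (Set.mem_singleton_iff.mp hx).symm
    · intro hmem
      exact absurd (Finset.mem_univ _) hmem
  have hdint : Integrable (fun x => dist x (xsel (π x))) μ := by
    rw [hdfun]
    exact integrable_finset_sum _ fun k _ => (hδs_int k).integrable_indicator (hNmeas k)
  have hdsum : ∫ x, dist x (xsel (π x)) ∂μ = ∑ k, (μ (π ⁻¹' {k})).toReal * δs k := by
    rw [hdfun, integral_finset_sum _ (fun k _ => (hδs_int k).integrable_indicator (hNmeas k))]
    refine Finset.sum_congr rfl fun k _ => ?_
    rw [integral_indicator (hNmeas k)]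
    by_cases hk : 0 < μ (π ⁻¹' {k})
    · rw [hδs_pos k hk, ← mul_assoc, mul_inv_cancel₀
        (ENNReal.toReal_ne_zero.mpr ⟨hk.ne', measure_ne_top μ _⟩), one_mul]
    · have hk0 : μ (π ⁻¹' {k}) = 0 := le_zero_iff.mp (not_lt.mp hk)
      rw [hk0]
      simp [Measure.restrict_eq_zero.mpr hk0]
  have hsum1 : ∑ k, (μ (π ⁻¹' {k})).toReal = 1 := by
    rw [← ENNReal.toReal_sum (fun k _ => measure_ne_top μ _),
      sum_measure_preimage_singleton _ (fun k _ => hNmeas k)]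
    simp
  have hsumint : Integrable (fun x => ∑ c, η c x * ℓ x c) μ :=
    integrable_finset_sum _ fun c _ => hprodint c
  have hmean : ∫ p, f p ∂ν ≤ B := by
    rw [hm_eq]
    have step1 : ∫ x, (∑ c, η c x * ℓ x c) ∂μ ≤ ∫ x, dist x (xsel (π x)) * K ∂μ :=
      integral_mono hsumint (hdint.mul_const K) hpt
    have step2 : ∫ x, dist x (xsel (π x)) * K ∂μ
        = (∑ k, (μ (π ⁻¹' {k})).toReal * δs k) * K := by
      rw [integral_mul_const, hdsum]
    have step3 : (∑ k, (μ (π ⁻¹' {k})).toReal * δs k) ≤ ⨆ k, δs k := by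
      calc ∑ k, (μ (π ⁻¹' {k})).toReal * δs k
          ≤ ∑ k, (μ (π ⁻¹' {k})).toReal * (⨆ k, δs k) :=
            Finset.sum_le_sum fun k _ =>
              mul_le_mul_of_nonneg_left (hsup_ge k) ENNReal.toReal_nonneg
        _ = (∑ k, (μ (π ⁻¹' {k})).toReal) * (⨆ k, δs k) := by rw [← Finset.sum_mul]
        _ = ⨆ k, δs k := by rw [hsum1, one_mul]
    refine step1.trans (step2.le.trans ?_)
    rw [hBdef]
    exact mul_le_mul_of_nonneg_right step3 hK0
  -- Step B: Chernoff/Hoeffding concentration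
  have hn' : (0:ℝ) < n := by exact_mod_cast hn
  set m' : ℝ := ∫ p, f p ∂ν with hm'def
  set Y : Fin n → Ω → ℝ := fun t ω => f (W t ω) with hYdef
  have hYmeas : ∀ t, Measurable (Y t) := fun t => hfmeas.comp (hWmeas t)
  have hY0 : ∀ t ω, 0 ≤ Y t ω := fun t ω => hℓ0 _ _
  have hYL : ∀ t ω, Y t ω ≤ (L : ℝ) := fun t ω => hℓL _ _
  have hYindep : iIndepFun Y P := by
    exact hWindep.comp (fun _ => f) (fun t => hfmeas)
  have hYmean : ∀ t, ∫ ω, Y t ω ∂P = m' := by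
    intro t
    rw [hm'def, ← hWlaw t, integral_map (hWmeas t).aemeasurable hfmeas.aestronglyMeasurable]
  set s0 : ℝ := 4 * ε / (L : ℝ) ^ 2 with hs0def
  have hs0 : 0 ≤ s0 := by positivity
  have hmgf_t : ∀ t, mgf (Y t) P s0 ≤ Real.exp (s0 * m' + s0 ^ 2 * (L:ℝ) ^ 2 / 8) := by
    intro t
    have h := coreset_aux_mgf P (Y t) (hYmeas t) (L : ℝ) hLpos (hY0 t) (hYL t) s0 hs0
    rwa [hYmean t] at h
  have hSapp : ∀ ω, (∑ t, Y t) ω = ∑ t, Y t ω := fun ω => Finset.sum_apply ω _ _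
  have hSfun : (∑ t, Y t) = fun ω => ∑ t, Y t ω := funext hSapp
  have hSmeas : Measurable (∑ t, Y t) := by
    rw [hSfun]
    exact Finset.measurable_sum Finset.univ fun t _ => hYmeas t
  have hexp_int_S : Integrable (fun ω => Real.exp (s0 * (∑ t, Y t) ω)) P := by
    refine (integrable_const (Real.exp (s0 * ((n:ℝ) * (L:ℝ))))).mono'
      ((hSmeas.const_mul s0).exp.aestronglyMeasurable) (ae_of_all _ fun ω => ?_)
    rw [Real.norm_eq_abs, abs_of_pos (Real.exp_pos _)]
    apply Real.exp_le_exp.mpr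
    refine mul_le_mul_of_nonneg_left ?_ hs0
    rw [hSapp ω]
    calc ∑ t, Y t ω ≤ ∑ _t : Fin n, (L:ℝ) := Finset.sum_le_sum fun t _ => hYL t ω
      _ = (n:ℝ) * (L:ℝ) := by
          rw [Finset.sum_const, Finset.card_univ, Fintype.card_fin, nsmul_eq_mul]
  have hchern := measure_ge_le_exp_mul_mgf (X := ∑ t, Y t) (μ := P) (t := s0)
    ((n : ℝ) * (B + ε)) hs0 hexp_int_S
  have hmgfS : mgf (∑ t, Y t) P s0 = ∏ t, mgf (Y t) P s0 := hYindep.mgf_sum hYmeas Finset.univ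
  have hlog : 0 ≤ Real.log (1/γ) := Real.log_nonneg (by rw [le_div_iff₀ hγ0]; linarith)
  have hε2 : ε ^ 2 = (L:ℝ) ^ 2 * Real.log (1/γ) / (2 * (n:ℝ)) := by
    rw [hεdef]
    exact Real.sq_sqrt (div_nonneg (mul_nonneg (sq_nonneg _) hlog) (by positivity))
  have hnum : Real.exp (-s0 * ((n:ℝ) * (B + ε))) * mgf (∑ t, Y t) P s0 ≤ γ := by
    rw [hmgfS]
    have hprod : ∏ t, mgf (Y t) P s0
        ≤ Real.exp ((n:ℝ) * (s0 * m' + s0 ^ 2 * (L:ℝ)^2/8)) := by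
      calc ∏ t, mgf (Y t) P s0
          ≤ ∏ _t : Fin n, Real.exp (s0 * m' + s0 ^ 2 * (L:ℝ)^2/8) :=
            Finset.prod_le_prod (fun t _ => mgf_nonneg) (fun t _ => hmgf_t t)
        _ = _ := by
            rw [Finset.prod_const, Finset.card_univ, Fintype.card_fin, ← Real.exp_nat_mul]
    calc Real.exp (-s0 * ((n:ℝ) * (B + ε))) * ∏ t, mgf (Y t) P s0
        ≤ Real.exp (-s0 * ((n:ℝ) * (B + ε)))
            * Real.exp ((n:ℝ) * (s0 * m' + s0 ^ 2 * (L:ℝ)^2/8)) :=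
          mul_le_mul_of_nonneg_left hprod (Real.exp_pos _).le
      _ = Real.exp (-s0 * ((n:ℝ) * (B + ε)) + (n:ℝ) * (s0 * m' + s0 ^ 2 * (L:ℝ)^2/8)) :=
          (Real.exp_add _ _).symm
      _ ≤ Real.exp (-(2:ℝ) * (n:ℝ) * ε^2 / (L:ℝ)^2) := by
          apply Real.exp_le_exp.mpr
          have hmB : m' ≤ B := hmean
          have hns0 : 0 ≤ (n:ℝ) * s0 := by positivity
          have key : -s0 * ((n:ℝ)*(B+ε)) + (n:ℝ)*(s0*m' + s0^2*(L:ℝ)^2/8)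
              ≤ -s0*((n:ℝ)*ε) + (n:ℝ)*(s0^2*(L:ℝ)^2/8) := by nlinarith
          refine key.trans (le_of_eq ?_)
          rw [hs0def]
          field_simp
          ring
      _ = γ := by
          rw [hε2]
          have heq : -(2:ℝ) * (n:ℝ) * ((L:ℝ)^2 * Real.log (1/γ) / (2*(n:ℝ))) / (L:ℝ)^2
              = - Real.log (1/γ) := by
            field_simp
          rw [heq, one_div, Real.log_inv, neg_neg, Real.exp_log hγ0]
  -- assemble
  set E := {ω | (1 / (n : ℝ)) * ∑ t, ℓ (W t ω).1 (W t ω).2 ≤ B + ε} with hEdef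
  have hEmeas : MeasurableSet E := by
    apply measurableSet_le
    · exact measurable_const.mul
        (by exact Finset.measurable_sum Finset.univ fun t _ => hYmeas t)
    · exact measurable_const
  have hsum_eq : ∀ ω, ∑ t, ℓ (W t ω).1 (W t ω).2 = ∑ t, Y t ω :=
    fun ω => Finset.sum_congr rfl fun t _ => rfl
  have hsub : Eᶜ ⊆ {ω | (n:ℝ) * (B + ε) ≤ (∑ t, Y t) ω} := by
    intro ω hω
    simp only [hEdef, Set.mem_compl_iff, Set.mem_setOf_eq, not_le] at hω
    rw [hsum_eq ω] at hω
    rw [Set.mem_setOf_eq, hSapp ω]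
    calc (n:ℝ) * (B + ε) ≤ (n:ℝ) * (1/(n:ℝ) * ∑ t, Y t ω) :=
          mul_le_mul_of_nonneg_left hω.le hn'.le
      _ = ∑ t, Y t ω := by
          field_simp
  have hPEc : P Eᶜ ≤ ENNReal.ofReal γ := by
    refine (measure_mono hsub).trans ?_
    rw [← ENNReal.ofReal_toReal (measure_ne_top P _)]
    exact ENNReal.ofReal_le_ofReal (hchern.trans hnum)
  calc ENNReal.ofReal (1 - γ) = 1 - ENNReal.ofReal γ := by
        rw [ENNReal.ofReal_sub _ hγ0.le, ENNReal.ofReal_one]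
    _ ≤ 1 - P Eᶜ := tsub_le_tsub_left hPEc 1
    _ = P E := by rw [← prob_compl_eq_one_sub hEmeas.compl, compl_compl]
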